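/- Let V be a finite-dimensional real vector space, Λ a lattice in V, and let P and Q be integers greater than 1 that are relatively prime. Let f : V → ℝ be a discretely supported function and define f_P(x) = f(Px) − f(x) and f_Q(x) = f(Qx) − f(x). If both f_P and f_Q are Λ-periodic, then there exists a function f' : V → ℝ with f'(x) = f(x) for all x ≠ 0 such that f' is Λ-periodic. -/

import Mathlib

open Filter Function

/-- `Λ` is a lattice in the finite-dimensional real vector space `V`:
it is the `ℤ`-span of an `ℝ`-basis of `V`. -/
def IsLattice (V : Type*) [NormedAddCommGroup V] [NormedSpace ℝ V]
    [FiniteDimensional ℝ V] (Λ : Set V) : Prop :=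
  ∃ b : Module.Basis (Fin (Module.finrank ℝ V)) ℝ V,
    Λ = (Submodule.span ℤ (Set.range b) : Submodule ℤ V)

/-- `f` is discretely supported: its support has no accumulation points in `V`. -/
def DiscretelySupported {V : Type*} [NormedAddCommGroup V] {α : Type*} [Zero α]
    (f : V → α) : Prop :=
  ∀ x : V, ¬ AccPt x (𝓟 (Function.support f))

/-- `f` is `Λ`-periodic. -/
def IsPeriodic {V : Type*} [AddCommGroup V] {α : Type*} (Λ : Set V) (f : V → α) : Prop :=
  ∀ x : V, ∀ l ∈ Λ, f (x + l) = f x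

section Aux

set_option linter.unusedSectionVars false

variable {V : Type*} [NormedAddCommGroup V] [NormedSpace ℝ V] [FiniteDimensional ℝ V]

/-- From no accumulation points: punctured-ball vanishing. -/
lemma disc_punct {f : V → ℝ} (hf : ∀ x : V, ¬ AccPt x (𝓟 (Function.support f)))
    (p : V) : ∃ ε > 0, ∀ y : V, y ≠ p → dist y p < ε → f y = 0 := by
  have h := hf p
  rw [accPt_iff_nhds] at h
  push_neg at h
  obtain ⟨U, hU, hU2⟩ := h
  obtain ⟨ε, hε, hball⟩ := Metric.mem_nhds_iff.1 hU
  refine ⟨ε, hε, fun y hy hd => ?_⟩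
  by_contra hfy
  exact hy (hU2 y ⟨hball (by simpa [Metric.mem_ball] using hd), hfy⟩)

/-- A set all whose points are "isolated from S" meets a compact set in a finite set. -/
lemma finite_inter_compact {S K : Set V}
    (hS : ∀ p : V, ∃ ε > 0, ∀ y ∈ S, dist y p < ε → y = p)
    (hK : IsCompact K) : (S ∩ K).Finite := by
  by_contra hinf
  have hinf' : (S ∩ K).Infinite := hinf
  set u : ℕ ↪ ↥(S ∩ K) := hinf'.natEmbedding _
  have hmem : ∀ n : ℕ, (u n : V) ∈ K := fun n => (u n).2.2
  obtain ⟨a, _, φ, hφ, hlim⟩ := hK.tendsto_subseq hmem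
  obtain ⟨ε, hε, hiso⟩ := hS a
  have hev : ∀ᶠ n in atTop, dist ((u (φ n) : V)) a < ε := by
    have := Metric.tendsto_nhds.mp hlim ε hε
    simpa using this
  obtain ⟨n, hn⟩ := hev.exists
  have h2 : ∀ᶠ m in atTop, dist ((u (φ m) : V)) a < ε := hev
  obtain ⟨m, hm, hmn⟩ := (h2.and (eventually_gt_atTop n)).exists
  have h1 : (u (φ n) : V) = a := hiso _ (u (φ n)).2.1 hn
  have h3 : (u (φ m) : V) = a := hiso _ (u (φ m)).2.1 hm
  have : u (φ n) = u (φ m) := Subtype.ext (h1.trans h3.symm)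
  have : φ n = φ m := u.injective this
  exact (Nat.ne_of_lt hmn) (hφ.injective this)

end Aux

section Lat
set_option linter.unusedSectionVars false

variable {V : Type*} [NormedAddCommGroup V] [NormedSpace ℝ V] [FiniteDimensional ℝ V]
variable {ι : Type*} [Fintype ι] (b : Module.Basis ι ℝ V)

def latt : Submodule ℤ V := Submodule.span ℤ (Set.range (⇑b))

lemma latt_def : latt b = Submodule.span ℤ (Set.range (⇑b)) := rfl

lemma cast_smul_mem {x : V} (hx : x ∈ latt b) (k : ℤ) : (k : ℝ) • x ∈ latt b := by
  rw [Int.cast_smul_eq_zsmul]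
  exact Submodule.smul_mem _ k hx

lemma int_comb_mem (c : ι → ℤ) : b.equivFun.symm (fun i => (c i : ℝ)) ∈ latt b := by
  rw [Module.Basis.equivFun_symm_apply]
  refine Submodule.sum_mem _ fun i _ => ?_
  exact cast_smul_mem b (Submodule.subset_span (Set.mem_range_self i)) (c i)

lemma mem_coords {x : V} (hx : x ∈ latt b) : ∀ i, ∃ k : ℤ, b.equivFun x i = (k : ℝ) := by
  rw [latt_def] at hx
  induction hx using Submodule.span_induction with
  | mem y hy =>
    obtain ⟨j, rfl⟩ := hy
    intro i
    classical
    refine ⟨if j = i then 1 else 0, ?_⟩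
    rw [b.equivFun_self]
    split <;> simp
  | zero => intro i; exact ⟨0, by simp⟩
  | add y z _ _ hy hz =>
    intro i
    obtain ⟨k, hk⟩ := hy i; obtain ⟨l, hl⟩ := hz i
    refine ⟨k + l, ?_⟩
    have : b.equivFun (y + z) = b.equivFun y + b.equivFun z := map_add _ _ _
    rw [this]
    simp only [Pi.add_apply, hk, hl]
    push_cast
    ring
  | smul n y _ hy =>
    intro i
    obtain ⟨k, hk⟩ := hy i
    refine ⟨n * k, ?_⟩
    have : b.equivFun (n • y) = n • b.equivFun y := map_zsmul b.equivFun n y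
    rw [this]
    simp only [Pi.smul_apply, hk]
    rw [zsmul_eq_mul]
    push_cast
    ring

lemma lattice_norm_lb : ∃ c : ℝ, 0 < c ∧ ∀ μ ∈ latt b, μ ≠ 0 → c ≤ ‖μ‖ := by
  set L : V →L[ℝ] (ι → ℝ) := LinearMap.toContinuousLinearMap (b.equivFun : V →ₗ[ℝ] (ι → ℝ))
  have hC : ∀ y : V, ‖L y‖ ≤ (‖L‖ + 1) * ‖y‖ := fun y =>
    le_trans (L.le_opNorm y) (by nlinarith [norm_nonneg y, norm_nonneg L])
  have hCpos : (0:ℝ) < ‖L‖ + 1 := by positivity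
  refine ⟨(‖L‖ + 1)⁻¹, by positivity, fun μ hμ hne => ?_⟩
  have hcoords := mem_coords b hμ
  have h1 : (1:ℝ) ≤ ‖L μ‖ := by
    have hLμ : L μ ≠ 0 := by
      intro h0
      apply hne
      have h0' : b.equivFun μ = 0 := h0
      have := congrArg b.equivFun.symm h0'
      rw [b.equivFun.symm_apply_apply] at this
      simpa using this
    obtain ⟨i, hi⟩ := Function.ne_iff.1 hLμ
    obtain ⟨k, hk⟩ := hcoords i
    have hki : (L μ) i = (k : ℝ) := hk
    have hk0 : k ≠ 0 := by
      intro h; apply hi; rw [hki, h]; simp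
    have : (1:ℝ) ≤ |(k:ℝ)| := by
      have := Int.one_le_abs hk0
      exact_mod_cast this
    calc (1:ℝ) ≤ |(k:ℝ)| := this
      _ = ‖(L μ) i‖ := by rw [hki]; simp [Real.norm_eq_abs]
      _ ≤ ‖L μ‖ := norm_le_pi_norm _ i
  have := le_trans h1 (hC μ)
  rw [inv_le_iff_one_le_mul₀' hCpos]
  linarith [this]
  
lemma escape (R : ℤ) (hR : 1 < R) (v : V) (hv : v ≠ 0) :
    ∃ A : ℕ, ∀ i ≥ A, ∀ μ ∈ latt b, v ≠ (R : ℝ) ^ i • μ := by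
  obtain ⟨c, hc, hlb⟩ := lattice_norm_lb b
  have hR' : (1:ℝ) < (R : ℝ) := by exact_mod_cast hR
  obtain ⟨A, hA⟩ := pow_unbounded_of_one_lt (‖v‖ / c) hR'
  refine ⟨A, fun i hi μ hμ heq => ?_⟩
  have hμ0 : μ ≠ 0 := by
    rintro rfl
    rw [smul_zero] at heq
    exact hv heq
  have hRpos : (0:ℝ) < (R:ℝ) ^ i := by positivity
  have h1 : ‖v‖ = (R:ℝ) ^ i * ‖μ‖ := by
    rw [heq, norm_smul, Real.norm_eq_abs, abs_of_pos hRpos]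
  have h2 : c ≤ ‖μ‖ := hlb μ hμ hμ0
  have h3 : (R:ℝ) ^ A ≤ (R:ℝ) ^ i := pow_le_pow_right₀ (le_of_lt hR') hi
  have h4 : ‖v‖ / c < (R:ℝ) ^ i := lt_of_lt_of_le hA h3
  rw [div_lt_iff₀ hc] at h4
  nlinarith

def Kbox : Set V := {y : V | ∀ i, b.equivFun y i ∈ Set.Icc (0:ℝ) 1}

lemma Kbox_compact : IsCompact (Kbox b) := by
  have h1 : IsCompact (Set.pi Set.univ fun _ : ι => Set.Icc (0:ℝ) 1) :=
    isCompact_univ_pi fun _ => isCompact_Icc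
  have hcont : Continuous (⇑b.equivFun.symm : (ι → ℝ) → V) := by
    have := LinearMap.continuous_of_finiteDimensional (b.equivFun.symm.toLinearMap)
    simpa using this
  have himg := h1.image hcont
  have heq : Kbox b = (⇑b.equivFun.symm : (ι → ℝ) → V) '' (Set.pi Set.univ fun _ : ι => Set.Icc (0:ℝ) 1) := by
    ext y
    constructor
    · intro hy
      exact ⟨b.equivFun y, fun i _ => hy i, b.equivFun.symm_apply_apply y⟩
    · rintro ⟨g, hg, rfl⟩
      intro i
      rw [b.equivFun.apply_symm_apply]
      exact hg i (Set.mem_univ i)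
  rw [heq]
  exact himg

noncomputable def flr (y : V) : V := b.equivFun.symm (fun i => ((⌊b.equivFun y i⌋ : ℤ) : ℝ))

lemma flr_mem (y : V) : flr b y ∈ latt b := int_comb_mem b _

lemma fract_mem (y : V) : y - flr b y ∈ Kbox b := by
  intro i
  have hmap : b.equivFun (y - flr b y) = b.equivFun y - b.equivFun (flr b y) := map_sub _ _ _
  have h3 : b.equivFun (flr b y) = fun j => ((⌊b.equivFun y j⌋:ℤ):ℝ) :=
    b.equivFun.apply_symm_apply _
  have h2 : b.equivFun (y - flr b y) i = b.equivFun y i - (⌊b.equivFun y i⌋:ℝ) := by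
    rw [hmap, Pi.sub_apply, h3]
  constructor <;> rw [h2]
  · simp only [sub_nonneg]
    exact Int.floor_le _
  · linarith [Int.lt_floor_add_one (b.equivFun y i)]

end Lat

section Side
set_option linter.unusedSectionVars false

variable {V : Type*} [NormedAddCommGroup V] [NormedSpace ℝ V] [FiniteDimensional ℝ V]
variable {ι : Type*} [Fintype ι] (b : Module.Basis ι ℝ V)
variable (f : V → ℝ) (g : V → ℝ) (R : ℤ)

/-- Expansion along division by `R`. -/
lemma expand (hg : ∀ x, g x = f ((R:ℝ) • x) - f x) (hR : 1 < R) (z : V) (a : ℕ) :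
    f z = f (((R:ℝ)^a)⁻¹ • z) + ∑ j ∈ Finset.range a, g (((R:ℝ)^(j+1))⁻¹ • z) := by
  have hRpos : (0:ℝ) < (R:ℝ) := by exact_mod_cast lt_trans zero_lt_one hR
  have hRne : ((R:ℝ)) ≠ 0 := ne_of_gt hRpos
  induction a with
  | zero => simp
  | succ n ih =>
    rw [Finset.sum_range_succ]
    have key : f (((R:ℝ)^n)⁻¹ • z) = f (((R:ℝ)^(n+1))⁻¹ • z) + g (((R:ℝ)^(n+1))⁻¹ • z) := by
      rw [hg]
      have h2 : (R:ℝ) • (((R:ℝ)^(n+1))⁻¹ • z) = ((R:ℝ)^n)⁻¹ • z := by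
        rw [smul_smul]
        congr 1
        field_simp
        ring
      rw [h2]
      ring
    rw [ih, key]
    ring

/-- Stable finite expansion for nonzero points. -/
lemma stable (hg : ∀ x, g x = f ((R:ℝ) • x) - f x) (hR : 1 < R)
    (hf : ∀ x : V, ¬ AccPt x (𝓟 (Function.support f)))
    (z : V) (hz : z ≠ 0) :
    ∃ A₀ : ℕ, ∀ a ≥ A₀, f z = ∑ j ∈ Finset.range a, g (((R:ℝ)^(j+1))⁻¹ • z) := by
  have hR' : (1:ℝ) < (R:ℝ) := by exact_mod_cast hR
  have hRpos : (0:ℝ) < (R:ℝ) := lt_trans zero_lt_one hR'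
  obtain ⟨ε, hε, h0⟩ := disc_punct hf 0
  obtain ⟨A, hA⟩ := pow_unbounded_of_one_lt (‖z‖ / ε) hR'
  refine ⟨A, fun a ha => ?_⟩
  rw [expand f g R hg hR z a]
  have hv : f (((R:ℝ)^a)⁻¹ • z) = 0 := by
    have hRa : (0:ℝ) < (R:ℝ)^a := by positivity
    apply h0
    · exact smul_ne_zero (by positivity) hz
    · have h1 : ‖z‖ / ε < (R:ℝ)^a :=
        lt_of_lt_of_le hA (pow_le_pow_right₀ (le_of_lt hR') ha)
      have h2 : ‖z‖ < (R:ℝ)^a * ε := by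
        rw [div_lt_iff₀ hε] at h1
        linarith
      have : dist (((R:ℝ)^a)⁻¹ • z) 0 = ((R:ℝ)^a)⁻¹ * ‖z‖ := by
        rw [dist_zero_right, norm_smul, Real.norm_eq_abs, abs_of_pos (by positivity)]
      rw [this, inv_mul_lt_iff₀ hRa]
      linarith
  rw [hv, zero_add]

/-- Scaling invariance of lattice differences. -/
lemma scaleRel (hg : ∀ x, g x = f ((R:ℝ) • x) - f x)
    (hper : ∀ x : V, ∀ l ∈ latt b, g (x + l) = g x)
    (x lam : V) (hlam : lam ∈ latt b) (a : ℕ) :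
    f ((R:ℝ)^a • (x + lam)) - f ((R:ℝ)^a • x) = f (x + lam) - f x := by
  induction a with
  | zero => simp
  | succ n ih =>
    have hfR : ∀ y : V, f ((R:ℝ) • y) = g y + f y := fun y => by rw [hg]; ring
    have e1 : (R:ℝ)^(n+1) • (x + lam) = (R:ℝ) • ((R:ℝ)^n • (x + lam)) := by
      rw [smul_smul, ← pow_succ']
    have e2 : (R:ℝ)^(n+1) • x = (R:ℝ) • ((R:ℝ)^n • x) := by
      rw [smul_smul, ← pow_succ']
    have e3 : (R:ℝ)^n • (x + lam) = (R:ℝ)^n • x + (R:ℝ)^n • lam := smul_add _ _ _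
    have hmem : (R:ℝ)^n • lam ∈ latt b := by
      have : ((R^n : ℤ) : ℝ) • lam ∈ latt b := cast_smul_mem b hlam (R^n)
      rwa [Int.cast_pow] at this
    have e4 : g ((R:ℝ)^n • (x + lam)) = g ((R:ℝ)^n • x) := by
      rw [e3]
      exact hper _ _ hmem
    rw [e1, e2, hfR, hfR, ← ih, e3]
    rw [e3] at e4
    rw [e4]
    ring

/-- The difference function is also discretely supported (punctured-ball form). -/
lemma disc_g (hg : ∀ x, g x = f ((R:ℝ) • x) - f x) (hR : 1 < R)
    (hf : ∀ x : V, ¬ AccPt x (𝓟 (Function.support f))) (p : V) :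
    ∃ ε > 0, ∀ y : V, y ≠ p → dist y p < ε → g y = 0 := by
  have hR' : (1:ℝ) < (R:ℝ) := by exact_mod_cast hR
  have hRpos : (0:ℝ) < (R:ℝ) := lt_trans zero_lt_one hR'
  obtain ⟨ε₁, hε₁, h1⟩ := disc_punct hf ((R:ℝ) • p)
  obtain ⟨ε₂, hε₂, h2⟩ := disc_punct hf p
  refine ⟨min ε₂ (ε₁ / (R:ℝ)), by positivity, fun y hy hd => ?_⟩
  have hd2 : dist y p < ε₂ := lt_of_lt_of_le hd (min_le_left _ _)
  have hd1 : dist y p < ε₁ / (R:ℝ) := lt_of_lt_of_le hd (min_le_right _ _)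
  rw [hg]
  have hfy : f y = 0 := h2 y hy hd2
  have hfRy : f ((R:ℝ) • y) = 0 := by
    apply h1
    · intro hc
      exact hy (smul_right_injective V (ne_of_gt hRpos) hc)
    · rw [dist_smul₀, Real.norm_eq_abs, abs_of_pos hRpos]
      calc (R:ℝ) * dist y p < (R:ℝ) * (ε₁ / (R:ℝ)) := by
            exact (mul_lt_mul_iff_right₀ hRpos).2 hd1
        _ = ε₁ := by field_simp
  rw [hfy, hfRy]
  ring

/-- Common denominator for rational support points in the box. -/
lemma exists_denom (hg : ∀ x, g x = f ((R:ℝ) • x) - f x) (hR : 1 < R)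
    (hf : ∀ x : V, ¬ AccPt x (𝓟 (Function.support f))) :
    ∃ D : ℤ, D ≠ 0 ∧ ∀ s ∈ (Function.support g ∩ Kbox b),
      (∃ d : ℤ, d ≠ 0 ∧ (d:ℝ) • s ∈ latt b) → (D:ℝ) • s ∈ latt b := by
  classical
  have hSg : ∀ p : V, ∃ ε > 0, ∀ y ∈ Function.support g, dist y p < ε → y = p := by
    intro p
    obtain ⟨ε, hε, h⟩ := disc_g f g R hg hR hf p
    refine ⟨ε, hε, fun y hy hd => ?_⟩
    by_contra hne
    exact hy (h y hne hd)
  have hfin : (Function.support g ∩ Kbox b).Finite :=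
    finite_inter_compact hSg (Kbox_compact b)
  set T := hfin.toFinset with hT
  refine ⟨∏ s ∈ T, (if h : ∃ d : ℤ, d ≠ 0 ∧ (d:ℝ) • s ∈ latt b then h.choose else 1),
    ?_, ?_⟩
  · rw [Finset.prod_ne_zero_iff]
    intro s hs
    split
    · next h => exact h.choose_spec.1
    · exact one_ne_zero
  · intro s hs hrat
    have hsT : s ∈ T := by rw [hT, Set.Finite.mem_toFinset]; exact hs
    have hdvd : (if h : ∃ d : ℤ, d ≠ 0 ∧ (d:ℝ) • s ∈ latt b then h.choose else 1) ∣
        ∏ t ∈ T, (if h : ∃ d : ℤ, d ≠ 0 ∧ (d:ℝ) • t ∈ latt b then h.choose else 1) :=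
      Finset.dvd_prod_of_mem _ hsT
    rw [dif_pos hrat] at hdvd
    obtain ⟨c, hc⟩ := hdvd
    rw [hc]
    have : ((hrat.choose * c : ℤ) : ℝ) • s = (c:ℝ) • ((hrat.choose : ℝ) • s) := by
      push_cast
      rw [smul_smul]
      ring_nf
    rw [this]
    exact cast_smul_mem b hrat.choose_spec.2 c

/-- Hit lemma: a nonzero term in the expansion of a rational point forces divisibility. -/
lemma hit (hg : ∀ x, g x = f ((R:ℝ) • x) - f x) (hR : 1 < R)
    (hper : ∀ x : V, ∀ l ∈ latt b, g (x + l) = g x)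
    (D : ℤ)
    (hD : ∀ s ∈ (Function.support g ∩ Kbox b),
      (∃ d : ℤ, d ≠ 0 ∧ (d:ℝ) • s ∈ latt b) → (D:ℝ) • s ∈ latt b)
    (z : V) (m : ℤ) (hm : m ≠ 0) (hzr : (m:ℝ) • z ∈ latt b)
    (i : ℕ) (hgz : g (((R:ℝ)^i)⁻¹ • z) ≠ 0) :
    ∃ μ ∈ latt b, (D:ℝ) • z = (R:ℝ)^i • μ := by
  have hRpos : (0:ℝ) < (R:ℝ) := by exact_mod_cast lt_trans zero_lt_one hR
  have hRne : ((R:ℝ)) ≠ 0 := ne_of_gt hRpos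
  have hRZ : (R:ℤ) ≠ 0 := by
    intro h
    rw [h] at hR
    omega
  set s := ((R:ℝ)^i)⁻¹ • z with hs
  set s₀ := s - flr b s with hs₀
  have hz_back : (R:ℝ)^i • s = z := smul_inv_smul₀ (pow_ne_zero _ hRne) z
  have he : s₀ + flr b s = s := by rw [hs₀]; abel
  have hgs : g s = g s₀ := by
    have h1 := hper s₀ _ (flr_mem b s)
    rwa [he] at h1
  have hgs₀ : g s₀ ≠ 0 := by rw [← hgs]; exact hgz
  have hmem : s₀ ∈ Function.support g ∩ Kbox b := ⟨hgs₀, fract_mem b s⟩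
  have hrat : ∃ d : ℤ, d ≠ 0 ∧ (d:ℝ) • s₀ ∈ latt b := by
    refine ⟨m * R^i, mul_ne_zero hm (pow_ne_zero _ hRZ), ?_⟩
    have hcalc : ((m * R^i : ℤ) : ℝ) • s₀ = (m:ℝ) • z - ((m * R^i : ℤ) : ℝ) • flr b s := by
      rw [hs₀, smul_sub]
      congr 1
      push_cast
      rw [mul_comm, ← smul_smul, smul_comm, hz_back]
    rw [hcalc]
    exact Submodule.sub_mem _ hzr (cast_smul_mem b (flr_mem b s) _)
  have hDs₀ : (D:ℝ) • s₀ ∈ latt b := hD s₀ hmem hrat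
  refine ⟨(D:ℝ) • s₀ + (D:ℝ) • flr b s,
    Submodule.add_mem _ hDs₀ (cast_smul_mem b (flr_mem b s) D), ?_⟩
  have h2 : (D:ℝ) • z = (R:ℝ)^i • ((D:ℝ) • s) := by
    rw [← hz_back, smul_comm]
  rw [h2]
  congr 1
  rw [hs₀, smul_sub]
  abel

/-- Rigidity: the value of `f` at a nonzero rational point is unchanged by
translations by deep `R`-divisible lattice vectors. -/
lemma rigid (hg : ∀ x, g x = f ((R:ℝ) • x) - f x) (hR : 1 < R)
    (hf : ∀ x : V, ¬ AccPt x (𝓟 (Function.support f)))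
    (hper : ∀ x : V, ∀ l ∈ latt b, g (x + l) = g x)
    (z : V) (hz : z ≠ 0) (m : ℤ) (hm : m ≠ 0) (hzr : (m:ℝ) • z ∈ latt b) :
    ∃ A : ℕ, 1 ≤ A ∧ ∀ ν ∈ latt b, z + (R:ℝ)^A • ν ≠ 0 →
      f (z + (R:ℝ)^A • ν) = f z := by
  have hRpos : (0:ℝ) < (R:ℝ) := by exact_mod_cast lt_trans zero_lt_one hR
  have hRne : ((R:ℝ)) ≠ 0 := ne_of_gt hRpos
  obtain ⟨D, hD0, hD⟩ := exists_denom b f g R hg hR hf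
  obtain ⟨A₀, hA₀⟩ := stable f g R hg hR hf z hz
  have hDz : (D:ℝ) • z ≠ 0 := smul_ne_zero (Int.cast_ne_zero.2 hD0) hz
  obtain ⟨A₁, hA₁⟩ := escape b R hR ((D:ℝ) • z) hDz
  refine ⟨max A₀ A₁ + 1, by omega, fun ν hν hzν => ?_⟩
  set A := max A₀ A₁ + 1 with hA
  set z' := z + (R:ℝ)^A • ν with hz'
  have hz'r : (m:ℝ) • z' ∈ latt b := by
    rw [hz', smul_add]
    refine Submodule.add_mem _ hzr ?_
    have : (m:ℝ) • ((R:ℝ)^A • ν) = ((m * R^A : ℤ) : ℝ) • ν := by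
      push_cast
      rw [smul_smul]
    rw [this]
    exact cast_smul_mem b hν _
  obtain ⟨A₀', hA₀'⟩ := stable f g R hg hR hf z' hzν
  set K := max A (max A₀ A₀') with hK
  have h1 : f z = ∑ j ∈ Finset.range K, g (((R:ℝ)^(j+1))⁻¹ • z) := hA₀ K (by omega)
  have h2 : f z' = ∑ j ∈ Finset.range K, g (((R:ℝ)^(j+1))⁻¹ • z') := hA₀' K (by omega)
  rw [h1, h2]
  apply Finset.sum_congr rfl
  intro j hj
  by_cases hiA : j + 1 ≤ A
  · have harg : ((R:ℝ)^(j+1))⁻¹ • z' = ((R:ℝ)^(j+1))⁻¹ • z + (R:ℝ)^(A-(j+1)) • ν := by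
      rw [hz', smul_add]
      congr 1
      rw [smul_smul]
      congr 1
      rw [pow_sub₀ _ hRne hiA]
      ring
    have hmem : (R:ℝ)^(A-(j+1)) • ν ∈ latt b := by
      have := cast_smul_mem b hν (R^(A-(j+1)))
      rwa [Int.cast_pow] at this
    rw [harg]
    exact hper _ _ hmem
  · push_neg at hiA
    have hz0 : g (((R:ℝ)^(j+1))⁻¹ • z) = 0 := by
      by_contra hne
      obtain ⟨μ, hμ, heq⟩ := hit b f g R hg hR hper D hD z m hm hzr (j+1) hne
      exact hA₁ (j+1) (by omega) μ hμ heq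
    have hz'0 : g (((R:ℝ)^(j+1))⁻¹ • z') = 0 := by
      by_contra hne
      obtain ⟨μ', hμ', heq'⟩ := hit b f g R hg hR hper D hD z' m hm hz'r (j+1) hne
      refine hA₁ A (by omega) ((R:ℝ)^(j+1-A) • μ' - (D:ℝ) • ν) ?_ ?_
      · refine Submodule.sub_mem _ ?_ (cast_smul_mem b hν D)
        have := cast_smul_mem b hμ' (R^(j+1-A))
        rwa [Int.cast_pow] at this
      · have hstep : (D:ℝ) • z = (D:ℝ) • z' - (R:ℝ)^A • ((D:ℝ) • ν) := by
          rw [hz', smul_add, smul_comm]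
          abel
        rw [hstep, heq', smul_sub]
        congr 1
        rw [smul_smul, ← pow_add]
        congr 2
        omega
    rw [hz0, hz'0]

end Side

section Main
set_option linter.unusedSectionVars false

variable {V : Type*} [NormedAddCommGroup V] [NormedSpace ℝ V] [FiniteDimensional ℝ V]
variable {ι : Type*} [Fintype ι] (b : Module.Basis ι ℝ V)
variable (f : V → ℝ) (P Q : ℤ)

/-- Two hits with the same box point force rationality. -/
lemma two_hits (hP : 1 < P) (hQ : 1 < Q) (hPQ : IsCoprime P Q)
    (x s₀ : V) (a a' i i' : ℕ) (haa : a < a')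
    (h₁ : (P:ℝ)^a • x - (Q:ℝ)^i • s₀ ∈ latt b)
    (h₂ : (P:ℝ)^a' • x - (Q:ℝ)^i' • s₀ ∈ latt b) :
    ∃ m : ℤ, m ≠ 0 ∧ (m:ℝ) • x ∈ latt b := by
  set d := a' - a with hd
  have hda : a + d = a' := by omega
  have hPne : (P:ℤ) ≠ 0 := by omega
  set k : ℤ := Q^i * P^d - Q^i' with hk
  have hk0 : k ≠ 0 := by
    intro hke
    have hdvd : P ∣ Q^i' := by
      have : Q^i * P^d = Q^i' := by omega
      rw [← this]
      exact Dvd.dvd.mul_left (dvd_pow_self P (by omega)) _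
    have hu : IsUnit P := (hPQ.pow_right).isUnit_of_dvd' (dvd_refl P) hdvd
    rcases Int.isUnit_iff.1 hu with h | h <;> omega
  set μ₁ := (P:ℝ)^a • x - (Q:ℝ)^i • s₀ with hμ₁
  set μ₂ := (P:ℝ)^a' • x - (Q:ℝ)^i' • s₀ with hμ₂
  have hks : (k:ℝ) • s₀ = μ₂ - (P:ℝ)^d • μ₁ := by
    rw [hμ₁, hμ₂, hk]
    push_cast
    rw [← hda]
    rw [pow_add]
    module
  have hks_mem : (k:ℝ) • s₀ ∈ latt b := by
    rw [hks]
    refine Submodule.sub_mem _ h₂ ?_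
    have := cast_smul_mem b h₁ (P^d)
    rwa [Int.cast_pow] at this
  refine ⟨k * P^a, mul_ne_zero hk0 (pow_ne_zero _ hPne), ?_⟩
  have hcalc : ((k * P^a : ℤ) : ℝ) • x = (Q:ℝ)^i • ((k:ℝ) • s₀) + (k:ℝ) • μ₁ := by
    rw [hμ₁]
    push_cast
    module
  rw [hcalc]
  refine Submodule.add_mem _ ?_ (cast_smul_mem b h₁ k)
  have := cast_smul_mem b hks_mem (Q^i)
  rwa [Int.cast_pow] at this

/-- If a difference along the lattice is nonzero, the base point is rational. -/
lemma irr (gP gQ : V → ℝ)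
    (hgP : ∀ x, gP x = f ((P:ℝ) • x) - f x) (hgQ : ∀ x, gQ x = f ((Q:ℝ) • x) - f x)
    (hP : 1 < P) (hQ : 1 < Q) (hPQ : IsCoprime P Q)
    (hf : ∀ x : V, ¬ AccPt x (𝓟 (Function.support f)))
    (hperP : ∀ x : V, ∀ l ∈ latt b, gP (x + l) = gP x)
    (hperQ : ∀ x : V, ∀ l ∈ latt b, gQ (x + l) = gQ x)
    (x lam : V) (hlam : lam ∈ latt b) (hx : x ≠ 0) (hxl : x + lam ≠ 0)
    (hne : f (x + lam) ≠ f x) :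
    ∃ m : ℤ, m ≠ 0 ∧ (m:ℝ) • x ∈ latt b := by
  classical
  have hQpos : (0:ℝ) < (Q:ℝ) := by exact_mod_cast lt_trans zero_lt_one hQ
  have hQne : ((Q:ℝ)) ≠ 0 := ne_of_gt hQpos
  have hPpos : (0:ℝ) < (P:ℝ) := by exact_mod_cast lt_trans zero_lt_one hP
  -- finite set of box support points for gQ
  have hSg : ∀ p : V, ∃ ε > 0, ∀ y ∈ Function.support gQ, dist y p < ε → y = p := by
    intro p
    obtain ⟨ε, hε, h⟩ := disc_g f gQ Q hgQ hQ hf p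
    refine ⟨ε, hε, fun y hy hd => ?_⟩
    by_contra hne'
    exact hy (h y hne' hd)
  have hfin : (Function.support gQ ∩ Kbox b).Finite :=
    finite_inter_compact hSg (Kbox_compact b)
  set T := hfin.toFinset with hT
  -- every scale level has a hit
  have hhit : ∀ a : ℕ, ∃ i : ℕ, ∃ s₀ ∈ T, (P:ℝ)^a • x - (Q:ℝ)^(i+1) • s₀ ∈ latt b := by
    intro a
    have hscale := scaleRel b f gP P hgP hperP x lam hlam a
    have hy₁ : (P:ℝ)^a • x ≠ 0 := smul_ne_zero (by positivity) hx
    have hy₂ : (P:ℝ)^a • (x + lam) ≠ 0 := smul_ne_zero (by positivity) hxl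
    obtain ⟨A₁, hA₁⟩ := stable f gQ Q hgQ hQ hf _ hy₁
    obtain ⟨A₂, hA₂⟩ := stable f gQ Q hgQ hQ hf _ hy₂
    set K := max A₁ A₂ with hK
    have h1 := hA₁ K (by omega)
    have h2 := hA₂ K (by omega)
    have hex : ∃ j ∈ Finset.range K,
        gQ (((Q:ℝ)^(j+1))⁻¹ • ((P:ℝ)^a • (x + lam))) ≠ gQ (((Q:ℝ)^(j+1))⁻¹ • ((P:ℝ)^a • x)) := by
      by_contra hall
      push_neg at hall
      apply hne
      have hsum : f ((P:ℝ)^a • (x + lam)) = f ((P:ℝ)^a • x) := by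
        rw [h1, h2]
        exact Finset.sum_congr rfl hall
      have := hscale
      rw [hsum] at this
      linarith
    obtain ⟨j, _, hj⟩ := hex
    have hone : gQ (((Q:ℝ)^(j+1))⁻¹ • ((P:ℝ)^a • (x + lam))) ≠ 0 ∨
        gQ (((Q:ℝ)^(j+1))⁻¹ • ((P:ℝ)^a • x)) ≠ 0 := by
      by_contra hc
      push_neg at hc
      rw [hc.1, hc.2] at hj
      exact hj rfl
    -- extract the hit
    have key : ∀ w : V, gQ (((Q:ℝ)^(j+1))⁻¹ • w) ≠ 0 →
        ∃ s₀ ∈ T, w - (Q:ℝ)^(j+1) • s₀ ∈ latt b := by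
      intro w hw
      set s := ((Q:ℝ)^(j+1))⁻¹ • w with hs
      set s₀ := s - flr b s with hs₀
      have hback : (Q:ℝ)^(j+1) • s = w := smul_inv_smul₀ (pow_ne_zero _ hQne) w
      have he : s₀ + flr b s = s := by rw [hs₀]; abel
      have hgs : gQ s = gQ s₀ := by
        have h1' := hperQ s₀ _ (flr_mem b s)
        rwa [he] at h1'
      have hgs₀ : gQ s₀ ≠ 0 := by rw [← hgs]; exact hw
      refine ⟨s₀, ?_, ?_⟩
      · rw [hT, Set.Finite.mem_toFinset]
        exact ⟨hgs₀, fract_mem b s⟩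
      · have : w - (Q:ℝ)^(j+1) • s₀ = (Q:ℝ)^(j+1) • flr b s := by
          rw [hs₀, smul_sub, hback]
          abel
        rw [this]
        have := cast_smul_mem b (flr_mem b s) (Q^(j+1))
        rwa [Int.cast_pow] at this
    rcases hone with hw | hw
    · obtain ⟨s₀, hsT, hmem⟩ := key _ hw
      refine ⟨j, s₀, hsT, ?_⟩
      have hsplit : (P:ℝ)^a • x - (Q:ℝ)^(j+1) • s₀ =
          ((P:ℝ)^a • (x + lam) - (Q:ℝ)^(j+1) • s₀) - (P:ℝ)^a • lam := by
        rw [smul_add]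
        abel
      rw [hsplit]
      refine Submodule.sub_mem _ hmem ?_
      have := cast_smul_mem b hlam (P^a)
      rwa [Int.cast_pow] at this
    · obtain ⟨s₀, hsT, hmem⟩ := key _ hw
      exact ⟨j, s₀, hsT, hmem⟩
  -- pigeonhole
  have hchoice : ∀ a : ℕ, ∃ p : {s // s ∈ T} × ℕ,
      (P:ℝ)^a • x - (Q:ℝ)^(p.2+1) • (p.1 : V) ∈ latt b := by
    intro a
    obtain ⟨i, s₀, hsT, hmem⟩ := hhit a
    exact ⟨⟨⟨s₀, hsT⟩, i⟩, hmem⟩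
  set F : ℕ → {s // s ∈ T} := fun a => (hchoice a).choose.1 with hF
  obtain ⟨a, a', hne', heq⟩ := Finite.exists_ne_map_eq_of_infinite F
  have hda := (hchoice a).choose_spec
  have hda' := (hchoice a').choose_spec
  set s₀ : V := ((hchoice a).choose.1 : V) with hs₀v
  have hs₀' : ((hchoice a').choose.1 : V) = s₀ := congrArg Subtype.val heq.symm
  rw [hs₀'] at hda'
  rcases Ne.lt_or_gt hne' with h | h
  · exact two_hits b P Q hP hQ hPQ x s₀ a a' _ _ h hda hda'
  · exact two_hits b P Q hP hQ hPQ x s₀ a' a _ _ h hda' hda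

end Main

section Main2
set_option linter.unusedSectionVars false

variable {V : Type*} [NormedAddCommGroup V] [NormedSpace ℝ V] [FiniteDimensional ℝ V]
variable {ι : Type*} [Fintype ι] (b : Module.Basis ι ℝ V)
variable (f : V → ℝ) (P Q : ℤ)

lemma coset_const (gP gQ : V → ℝ)
    (hgP : ∀ x, gP x = f ((P:ℝ) • x) - f x) (hgQ : ∀ x, gQ x = f ((Q:ℝ) • x) - f x)
    (hP : 1 < P) (hQ : 1 < Q) (hPQ : IsCoprime P Q)
    (hf : ∀ x : V, ¬ AccPt x (𝓟 (Function.support f)))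
    (hperP : ∀ x : V, ∀ l ∈ latt b, gP (x + l) = gP x)
    (hperQ : ∀ x : V, ∀ l ∈ latt b, gQ (x + l) = gQ x)
    (z : V) (hz : z ≠ 0) (m : ℤ) (hm : m ≠ 0) (hzr : (m:ℝ) • z ∈ latt b)
    (ν : V) (hν : ν ∈ latt b) (hzν : z + ν ≠ 0) :
    f (z + ν) = f z := by
  classical
  obtain ⟨A, hA1, hA⟩ := rigid b f gP P hgP hP hf hperP z hz m hm hzr
  have hz'r : (m:ℝ) • (z + ν) ∈ latt b := by
    rw [smul_add]
    exact Submodule.add_mem _ hzr (cast_smul_mem b hν m)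
  obtain ⟨B, hB1, hB⟩ := rigid b f gQ Q hgQ hQ hf hperQ (z + ν) hzν m hm hz'r
  obtain ⟨u, v, huv⟩ := hPQ.pow (m := A) (n := B)
  have hι : Nonempty ι := by
    by_contra hemp
    rw [not_nonempty_iff] at hemp
    apply hz
    have h0 : b.equivFun z = b.equivFun 0 := Subsingleton.elim _ _
    exact b.equivFun.injective h0
  set ν₀ : V := b (Classical.arbitrary ι) with hν₀def
  have hν₀mem : ν₀ ∈ latt b := Submodule.subset_span (Set.mem_range_self _)
  have hν₀ne : ν₀ ≠ 0 := b.ne_zero _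
  have hPQne : ((P:ℝ)^A * (Q:ℝ)^B) ≠ 0 := by
    have : (0:ℝ) < (P:ℝ) := by exact_mod_cast lt_trans zero_lt_one hP
    have : (0:ℝ) < (Q:ℝ) := by exact_mod_cast lt_trans zero_lt_one hQ
    positivity
  -- the bridge identity for a parameter t
  have hbridge : ∀ t : ℤ,
      z + (P:ℝ)^A • ((u:ℝ) • ν + ((t * Q^B : ℤ):ℝ) • ν₀) =
      (z + ν) + (Q:ℝ)^B • (((-v : ℤ):ℝ) • ν + ((t * P^A : ℤ):ℝ) • ν₀) := by
    intro t
    have hr : (u:ℝ) * (P:ℝ)^A + (v:ℝ) * (Q:ℝ)^B = 1 := by exact_mod_cast congrArg (Int.cast : ℤ → ℝ) huv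
    push_cast
    match_scalars
    · ring
    · linear_combination hr
    · ring
  have hmain : ∀ t : ℤ, z + (P:ℝ)^A • ((u:ℝ) • ν + ((t * Q^B : ℤ):ℝ) • ν₀) ≠ 0 →
      f (z + ν) = f z := by
    intro t hne0
    have hμP : (u:ℝ) • ν + ((t * Q^B : ℤ):ℝ) • ν₀ ∈ latt b :=
      Submodule.add_mem _ (cast_smul_mem b hν u) (cast_smul_mem b hν₀mem _)
    have hμQ : ((-v : ℤ):ℝ) • ν + ((t * P^A : ℤ):ℝ) • ν₀ ∈ latt b :=
      Submodule.add_mem _ (cast_smul_mem b hν (-v)) (cast_smul_mem b hν₀mem _)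
    have h1 : f (z + (P:ℝ)^A • ((u:ℝ) • ν + ((t * Q^B : ℤ):ℝ) • ν₀)) = f z :=
      hA _ hμP hne0
    have hne0' : (z + ν) + (Q:ℝ)^B • (((-v : ℤ):ℝ) • ν + ((t * P^A : ℤ):ℝ) • ν₀) ≠ 0 := by
      rw [← hbridge t]
      exact hne0
    have h2 : f ((z + ν) + (Q:ℝ)^B • (((-v : ℤ):ℝ) • ν + ((t * P^A : ℤ):ℝ) • ν₀)) = f (z + ν) :=
      hB _ hμQ hne0'
    rw [← h1, hbridge t, h2]
  by_cases hc : z + (P:ℝ)^A • ((u:ℝ) • ν + ((0 * Q^B : ℤ):ℝ) • ν₀) ≠ 0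
  · exact hmain 0 hc
  · push_neg at hc
    apply hmain 1
    have hdiff : z + (P:ℝ)^A • ((u:ℝ) • ν + ((1 * Q^B : ℤ):ℝ) • ν₀) =
        (z + (P:ℝ)^A • ((u:ℝ) • ν + ((0 * Q^B : ℤ):ℝ) • ν₀)) + ((P:ℝ)^A * (Q:ℝ)^B) • ν₀ := by
      push_cast
      match_scalars <;> ring
    rw [hdiff, hc, zero_add]
    exact smul_ne_zero hPQne hν₀ne

lemma key (gP gQ : V → ℝ)
    (hgP : ∀ x, gP x = f ((P:ℝ) • x) - f x) (hgQ : ∀ x, gQ x = f ((Q:ℝ) • x) - f x)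
    (hP : 1 < P) (hQ : 1 < Q) (hPQ : IsCoprime P Q)
    (hf : ∀ x : V, ¬ AccPt x (𝓟 (Function.support f)))
    (hperP : ∀ x : V, ∀ l ∈ latt b, gP (x + l) = gP x)
    (hperQ : ∀ x : V, ∀ l ∈ latt b, gQ (x + l) = gQ x)
    (x lam : V) (hlam : lam ∈ latt b) (hx : x ≠ 0) (hxl : x + lam ≠ 0) :
    f (x + lam) = f x := by
  by_contra hne
  obtain ⟨m, hm, hmx⟩ := irr b f P Q gP gQ hgP hgQ hP hQ hPQ hf hperP hperQ x lam hlam hx hxl hne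
  exact hne (coset_const b f P Q gP gQ hgP hgQ hP hQ hPQ hf hperP hperQ x hx m hm hmx lam hlam hxl)

end Main2


/-- **Theorem 1 (Periodicity Theorem).** If `P, Q > 1` are relatively prime integers,
`f` is discretely supported, and both `f_P(x) = f(Px) - f(x)` and `f_Q(x) = f(Qx) - f(x)`
are `Λ`-periodic, then some modification of `f` at `0` is `Λ`-periodic. -/
theorem periodicity_theorem
    (V : Type*) [NormedAddCommGroup V] [NormedSpace ℝ V] [FiniteDimensional ℝ V]
    (Λ : Set V) (hΛ : IsLattice V Λ)
    (P Q : ℤ) (hP : 1 < P) (hQ : 1 < Q) (hPQ : IsCoprime P Q)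
    (f : V → ℝ) (hf : DiscretelySupported f)
    (hfP : IsPeriodic Λ (fun x => f ((P : ℝ) • x) - f x))
    (hfQ : IsPeriodic Λ (fun x => f ((Q : ℝ) • x) - f x)) :
    ∃ f' : V → ℝ, (∀ x : V, x ≠ 0 → f' x = f x) ∧ IsPeriodic Λ f' := by
  classical
  obtain ⟨b, hb⟩ := hΛ
  subst hb
  have hmem : ∀ l : V, l ∈ (↑(Submodule.span ℤ (Set.range ⇑b) : Submodule ℤ V) : Set V) ↔
      l ∈ latt b := by intro l; rfl
  have hperP : ∀ x : V, ∀ l ∈ latt b,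
      (fun x => f ((P : ℝ) • x) - f x) (x + l) = (fun x => f ((P : ℝ) • x) - f x) x := by
    intro x l hl
    exact hfP x l ((hmem l).2 hl)
  have hperQ : ∀ x : V, ∀ l ∈ latt b,
      (fun x => f ((Q : ℝ) • x) - f x) (x + l) = (fun x => f ((Q : ℝ) • x) - f x) x := by
    intro x l hl
    exact hfQ x l ((hmem l).2 hl)
  have hkey : ∀ x lam : V, lam ∈ latt b → x ≠ 0 → x + lam ≠ 0 → f (x + lam) = f x := by
    intro x lam hlam hx hxl
    exact key b f P Q _ _ (fun _ => rfl) (fun _ => rfl) hP hQ hPQ hf hperP hperQ x lam hlam hx hxl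
  rcases subsingleton_or_nontrivial V with hV | hV
  · refine ⟨f, fun x _ => rfl, fun x l _ => ?_⟩
    have : x + l = x := Subsingleton.elim _ _
    rw [this]
  · have hn : 0 < Module.finrank ℝ V := Module.finrank_pos
    set i₀ : Fin (Module.finrank ℝ V) := ⟨0, hn⟩
    set ν₀ : V := b i₀ with hν₀def
    have hν₀mem : ν₀ ∈ latt b := Submodule.subset_span (Set.mem_range_self _)
    have hν₀ne : ν₀ ≠ 0 := b.ne_zero _
    have hconst : ∀ ν : V, ν ∈ latt b → ν ≠ 0 → f ν = f ν₀ := by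
      intro ν hν hν0
      have h1 := hkey ν₀ (ν - ν₀) (Submodule.sub_mem _ hν hν₀mem) hν₀ne
        (by rw [add_sub_cancel]; exact hν0)
      rw [add_sub_cancel] at h1
      exact h1
    refine ⟨fun y => if y = 0 then f ν₀ else f y, fun x hx => by simp [hx], ?_⟩
    intro x l hl'
    have hl : l ∈ latt b := (hmem l).2 hl'
    by_cases hx0 : x = 0
    · subst hx0
      rw [zero_add]
      by_cases hl0 : l = 0
      · subst hl0; rfl
      · simp only [if_neg hl0, if_pos rfl]
        exact hconst l hl hl0
    · by_cases hxl0 : x + l = 0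
      · have hxval : x = -l := eq_neg_of_add_eq_zero_left hxl0
        have hxmem : x ∈ latt b := by rw [hxval]; exact Submodule.neg_mem _ hl
        simp only [if_pos hxl0, if_neg hx0]
        exact (hconst x hxmem hx0).symm
      · simp only [if_neg hx0, if_neg hxl0]
        exact hkey x l hl hx0 hxl0
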